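/- Under the hypotheses of the previous statement (monad T with opmonoidal structure (τ, τ₀) satisfying equation (eq:tau_1)), the idempotent ⊓ := (TK ⊗ τ₀) ∘ (TK ⊗ m_K) ∘ τ_{K,TK} ∘ u_{TK} on TK satisfies ⊓ ∘ m_K ∘ T(⊓) = ⊓ ∘ m_K : T²K → TK. -/

import Mathlib

open CategoryTheory MonoidalCategory

/-- An opmonoidal (comonoidal) structure on an endofunctor of a monoidal category. -/
structure OpmonStr {M : Type*} [Category M] [MonoidalCategory M] (T : M ⥤ M) where
  τ : ∀ X Y : M, T.obj (X ⊗ Y) ⟶ T.obj X ⊗ T.obj Y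
  τ0 : T.obj (𝟙_ M) ⟶ 𝟙_ M
  τ_natural : ∀ {X Y X' Y' : M} (f : X ⟶ X') (g : Y ⟶ Y'),
      T.map (f ⊗ₘ g) ≫ τ X' Y' = τ X Y ≫ (T.map f ⊗ₘ T.map g)
  τ_coassoc : ∀ X Y Z : M,
      τ (X ⊗ Y) Z ≫ (τ X Y ⊗ₘ 𝟙 (T.obj Z)) ≫ (α_ (T.obj X) (T.obj Y) (T.obj Z)).hom =
        T.map (α_ X Y Z).hom ≫ τ X (Y ⊗ Z) ≫ (𝟙 (T.obj X) ⊗ₘ τ Y Z)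
  τ_counit_left : ∀ X : M,
      τ (𝟙_ M) X ≫ (τ0 ⊗ₘ 𝟙 (T.obj X)) ≫ (λ_ (T.obj X)).hom = T.map (λ_ X).hom
  τ_counit_right : ∀ X : M,
      τ X (𝟙_ M) ≫ (𝟙 (T.obj X) ⊗ₘ τ0) ≫ (ρ_ (T.obj X)).hom = T.map (ρ_ X).hom

variable {M : Type*} [Category M] [MonoidalCategory M]

/-- The canonical morphism `⊓ : TK ⟶ TK` associated to a monad with an opmonoidal
structure on its underlying endofunctor. -/
noncomputable def sqcap (T : Monad M) (O : OpmonStr (T : M ⥤ M)) :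
    T.obj (𝟙_ M) ⟶ T.obj (𝟙_ M) :=
  T.η.app (T.obj (𝟙_ M)) ≫ T.map (λ_ (T.obj (𝟙_ M))).inv ≫ O.τ (𝟙_ M) (T.obj (𝟙_ M)) ≫
    (𝟙 (T.obj (𝟙_ M)) ⊗ₘ T.μ.app (𝟙_ M)) ≫ (𝟙 (T.obj (𝟙_ M)) ⊗ₘ O.τ0) ≫
    (ρ_ (T.obj (𝟙_ M))).hom

/-- Auxiliary morphism `g : T(K ⊗ TK) ⟶ TK`. -/
noncomputable def gmor (T : Monad M) (O : OpmonStr (T : M ⥤ M)) :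
    T.obj (𝟙_ M ⊗ T.obj (𝟙_ M)) ⟶ T.obj (𝟙_ M) :=
  O.τ (𝟙_ M) (T.obj (𝟙_ M)) ≫ (𝟙 (T.obj (𝟙_ M)) ⊗ₘ T.μ.app (𝟙_ M)) ≫
    (𝟙 (T.obj (𝟙_ M)) ⊗ₘ O.τ0) ≫ (ρ_ (T.obj (𝟙_ M))).hom

lemma sqcap_eq (T : Monad M) (O : OpmonStr (T : M ⥤ M)) :
    sqcap T O = (λ_ (T.obj (𝟙_ M))).inv ≫ T.η.app (𝟙_ M ⊗ T.obj (𝟙_ M)) ≫ gmor T O := by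
  have h := T.η.naturality (λ_ (T.obj (𝟙_ M))).inv
  simp only [Functor.id_map] at h
  rw [sqcap, gmor, ← Category.assoc, ← h]
  simp

/-- Precomposition with `sqcap` via naturality of the unit. -/
lemma comp_sqcap (T : Monad M) (O : OpmonStr (T : M ⥤ M)) {A : M}
    (f : A ⟶ T.obj (𝟙_ M)) :
    f ≫ sqcap T O = T.η.app A ≫ T.map (f ≫ (λ_ (T.obj (𝟙_ M))).inv) ≫ gmor T O := by
  have h := T.η.naturality (f ≫ (λ_ (T.obj (𝟙_ M))).inv)
  simp only [Functor.id_map] at h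
  rw [sqcap_eq, ← Category.assoc, ← Category.assoc, h, Category.assoc]

/-- Key consequence of `τ_counit_left`. -/
lemma taucl (T : Monad M) (O : OpmonStr (T : M ⥤ M)) :
    T.map (λ_ (T.obj (𝟙_ M))).inv ≫ O.τ (𝟙_ M) (T.obj (𝟙_ M)) ≫
      O.τ0 ▷ T.obj (T.obj (𝟙_ M)) = (λ_ (T.obj (T.obj (𝟙_ M)))).inv := by
  rw [← cancel_mono (λ_ (T.obj (T.obj (𝟙_ M)))).hom]
  have h := O.τ_counit_left (T.obj (𝟙_ M))
  rw [tensorHom_id] at h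
  simp [h, ← Functor.map_comp]

/-- `(T λ⁻¹ ≫ g) ≫ τ0 = μ ≫ τ0`. -/
lemma gmor_tau0 (T : Monad M) (O : OpmonStr (T : M ⥤ M)) :
    T.map (λ_ (T.obj (𝟙_ M))).inv ≫ gmor T O ≫ O.τ0 =
      T.μ.app (𝟙_ M) ≫ O.τ0 := by
  rw [gmor]
  simp only [Category.assoc]
  simp only [id_tensorHom, Category.assoc]
  rw [← rightUnitor_naturality O.τ0]
  slice_lhs 4 5 => rw [whisker_exchange]
  slice_lhs 3 4 => rw [whisker_exchange]
  slice_lhs 1 3 => rw [taucl T O]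
  simp [← unitors_equal, ← leftUnitor_inv_naturality_assoc]

/-- Lemma: under condition (eq:tau_1), `⊓ ∘ m_K ∘ T⊓ = ⊓ ∘ m_K`. -/
theorem sqcap_mul (T : Monad M) (O : OpmonStr (T : M ⥤ M))
    (htau1 : ∀ X : M,
      T.map (T.η.app (X ⊗ T.obj (𝟙_ M)) ≫ O.τ X (T.obj (𝟙_ M)) ≫
          (𝟙 (T.obj X) ⊗ₘ T.μ.app (𝟙_ M)) ≫ (𝟙 (T.obj X) ⊗ₘ O.τ0) ≫ (ρ_ (T.obj X)).hom) ≫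
        T.μ.app X =
      O.τ X (T.obj (𝟙_ M)) ≫ (𝟙 (T.obj X) ⊗ₘ T.μ.app (𝟙_ M)) ≫
        (𝟙 (T.obj X) ⊗ₘ O.τ0) ≫ (ρ_ (T.obj X)).hom) :
    T.map (sqcap T O) ≫ T.μ.app (𝟙_ M) ≫ sqcap T O = T.μ.app (𝟙_ M) ≫ sqcap T O := by
  have hg : T.map (T.η.app (𝟙_ M ⊗ T.obj (𝟙_ M)) ≫ gmor T O) ≫ T.μ.app (𝟙_ M) = gmor T O :=
    htau1 (𝟙_ M)
  -- Step A : T ⊓ ≫ μ = T λ⁻¹ ≫ g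
  have hA : T.map (sqcap T O) ≫ T.μ.app (𝟙_ M) =
      T.map (λ_ (T.obj (𝟙_ M))).inv ≫ gmor T O := by
    rw [sqcap_eq, T.map_comp, Category.assoc, hg]
  -- whiskering lemma
  have hwh : ∀ {Z : M} (f : Z ⟶ T.obj (𝟙_ M)),
      T.map (𝟙_ M ◁ f) ≫ gmor T O =
        O.τ (𝟙_ M) Z ≫ (T.obj (𝟙_ M) ◁ (T.map f ≫ T.μ.app (𝟙_ M) ≫ O.τ0)) ≫
          (ρ_ (T.obj (𝟙_ M))).hom := by
    intro Z f
    have h := O.τ_natural (𝟙 (𝟙_ M)) f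
    rw [id_tensorHom] at h
    rw [gmor, ← Category.assoc, h]
    simp [MonoidalCategory.whiskerLeft_comp]
  -- key computation with μ and τ0
  have hkey : T.map (T.map (λ_ (T.obj (𝟙_ M))).inv ≫ gmor T O) ≫ T.μ.app (𝟙_ M) ≫ O.τ0 =
      T.map (T.μ.app (𝟙_ M)) ≫ T.μ.app (𝟙_ M) ≫ O.τ0 := by
    have hnat := T.μ.naturality (sqcap T O)
    simp only [Functor.comp_map] at hnat
    rw [← hA, T.map_comp, Category.assoc, ← Category.assoc (T.map (T.μ.app (𝟙_ M))),
      T.assoc, Category.assoc, ← Category.assoc (T.map (T.map (sqcap T O))), hnat,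
      Category.assoc, ← Category.assoc (T.map (sqcap T O)), hA, Category.assoc,
      gmor_tau0, ← Category.assoc, ← T.assoc, Category.assoc]
  -- main reduction
  have hmain : T.map ((T.map (λ_ (T.obj (𝟙_ M))).inv ≫ gmor T O) ≫ (λ_ (T.obj (𝟙_ M))).inv) ≫
      gmor T O = T.map (T.μ.app (𝟙_ M) ≫ (λ_ (T.obj (𝟙_ M))).inv) ≫ gmor T O := by
    rw [leftUnitor_inv_naturality, leftUnitor_inv_naturality (T.μ.app (𝟙_ M)),
      T.map_comp, T.map_comp, Category.assoc, Category.assoc, hwh, hwh]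
    simp only [Category.assoc, Functor.comp_obj]
    rw [hkey]
  rw [reassoc_of% hA, comp_sqcap T O (gmor T O), comp_sqcap T O (T.μ.app (𝟙_ M))]
  have hη2 := T.η.naturality (T.map (λ_ (T.obj (𝟙_ M))).inv)
  simp only [Functor.id_map] at hη2
  rw [← Category.assoc, hη2, Category.assoc, ← Functor.map_comp_assoc,
    ← Category.assoc (T.map (λ_ (T.obj (𝟙_ M))).inv) (gmor T O) (λ_ (T.obj (𝟙_ M))).inv,
    hmain]
  rfl
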